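/- For any connected graph G with at least one vertex and any graph H, the domatic number of the corona product satisfies d(G⊙H) = d(H) + 1. -/

import Mathlib

open SimpleGraph

/-- The corona product `G ⊙ H`: one copy of `G` together with one copy of `H`
for each vertex of `G`, where the `i`-th vertex of `G` is joined by an edge to
every vertex of the `i`-th copy of `H`. -/
def corona {α β : Type*} (G : SimpleGraph α) (H : SimpleGraph β) :
    SimpleGraph (α ⊕ α × β) where
  Adj x y :=
    match x, y with
    | Sum.inl u, Sum.inl v => G.Adj u v
    | Sum.inl u, Sum.inr q => u = q.1
    | Sum.inr p, Sum.inl v => p.1 = v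
    | Sum.inr p, Sum.inr q => p.1 = q.1 ∧ H.Adj p.2 q.2
  symm := ⟨by
    rintro (u | p) (v | q) h
    · exact h.symm
    · exact h.symm
    · exact h.symm
    · exact ⟨h.1.symm, h.2.symm⟩⟩
  loopless := ⟨by
    rintro (u | p) h
    · exact G.loopless.irrefl u h
    · exact H.loopless.irrefl p.2 h.2⟩

/-- `D` is a dominating set of `G`: every vertex outside `D` has a neighbor in `D`. -/
def IsDominatingSet {α : Type*} (G : SimpleGraph α) (D : Set α) : Prop :=
  ∀ v ∉ D, ∃ u ∈ D, G.Adj v u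

/-- The domination number of `G`. -/
noncomputable def dominationNumber {α : Type*} (G : SimpleGraph α) : ℕ :=
  sInf {n | ∃ D : Set α, IsDominatingSet G D ∧ D.ncard = n}

/-- The domatic number of `G`: the maximum number of classes in a partition of
the vertex set of `G` into dominating sets (realized as a map onto `Fin t`
all of whose fibers are dominating sets). -/
noncomputable def domaticNumber {α : Type*} (G : SimpleGraph α) : ℕ :=
  sSup {t | ∃ f : α → Fin t, ∀ i : Fin t, IsDominatingSet G (f ⁻¹' {i})}

lemma dom_nonempty {β : Type*} [Nonempty β] {H : SimpleGraph β} {D : Set β}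
    (h : IsDominatingSet H D) : D.Nonempty := by
  obtain ⟨b⟩ := ‹Nonempty β›
  by_cases hb : b ∈ D
  · exact ⟨b, hb⟩
  · obtain ⟨u, hu, _⟩ := h b hb; exact ⟨u, hu⟩

lemma one_mem_dom {β : Type*} [Nonempty β] (H : SimpleGraph β) :
    1 ∈ {t | ∃ f : β → Fin t, ∀ i : Fin t, IsDominatingSet H (f ⁻¹' {i})} := by
  refine ⟨fun _ => 0, fun i v hv => absurd (Subsingleton.elim (0 : Fin 1) i) hv⟩

lemma bdd_dom {β : Type*} [Fintype β] [Nonempty β] (H : SimpleGraph β) :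
    BddAbove {t | ∃ f : β → Fin t, ∀ i : Fin t, IsDominatingSet H (f ⁻¹' {i})} := by
  refine ⟨Fintype.card β, fun t ht => ?_⟩
  obtain ⟨f, hf⟩ := ht
  have hsurj : Function.Surjective f := fun i => dom_nonempty (hf i)
  simpa using Fintype.card_le_of_surjective f hsurj

/-- For any connected graph `G` and any (nonempty) graph `H`,
`d(G ⊙ H) = d(H) + 1`. -/
theorem stmt_18 {α β : Type*} [Fintype α] [Fintype β] [Nonempty β]
    (G : SimpleGraph α) (H : SimpleGraph β) (hG : G.Connected) :
    domaticNumber (corona G H) = domaticNumber H + 1 := by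
  classical
  have hα : Nonempty α := hG.nonempty
  set SH : Set ℕ := {t | ∃ f : β → Fin t, ∀ i : Fin t, IsDominatingSet H (f ⁻¹' {i})} with hSHdef
  set SC : Set ℕ :=
    {t | ∃ f : α ⊕ α × β → Fin t, ∀ i : Fin t, IsDominatingSet (corona G H) (f ⁻¹' {i})}
    with hSCdef
  have hdH : domaticNumber H = sSup SH := rfl
  have hdC : domaticNumber (corona G H) = sSup SC := rfl
  set d : ℕ := domaticNumber H with hd
  -- d(H) is attained
  have hdmem : d ∈ SH := Nat.sSup_mem ⟨1, one_mem_dom H⟩ (bdd_dom H)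
  obtain ⟨f, hf⟩ := hdmem
  -- Lower bound: d + 1 ∈ SC
  have hmem : d + 1 ∈ SC := by
    refine ⟨fun x => match x with
      | Sum.inl _ => Fin.last d
      | Sum.inr p => (f p.2).castSucc, fun i => ?_⟩
    by_cases hi : i = Fin.last d
    · subst hi
      rintro (u | ⟨u, b⟩) hv
      · exact absurd rfl hv
      · refine ⟨Sum.inl u, rfl, rfl⟩
    · have hji : (i.castPred hi).castSucc = i := Fin.castSucc_castPred i hi
      set j : Fin d := i.castPred hi with hj
      obtain ⟨b0, hb0⟩ : (f ⁻¹' {j}).Nonempty := dom_nonempty (hf j)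
      rintro (u | ⟨u, b⟩) hv
      · refine ⟨Sum.inr (u, b0), ?_, rfl⟩
        show (f b0).castSucc = i
        rw [hb0, hji]
      · have hb : b ∉ f ⁻¹' {j} := by
          intro hbj
          apply hv
          show (f b).castSucc = i
          rw [hbj, hji]
        obtain ⟨b', hb', hadj⟩ := hf j b hb
        refine ⟨Sum.inr (u, b'), ?_, ⟨rfl, hadj⟩⟩
        show (f b').castSucc = i
        rw [hb', hji]
  -- Upper bound: every t ∈ SC is ≤ d + 1
  have hub : ∀ t ∈ SC, t ≤ d + 1 := by
    rintro t ⟨g, hg⟩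
    obtain ⟨u₀⟩ := hα
    match t with
    | 0 => exact (g (Sum.inl u₀)).elim0
    | 1 => omega
    | (s + 2) =>
      -- show s + 1 ∈ SH
      have hmemH : s + 1 ∈ SH := by
        set c₀ : Fin (s + 2) := g (Sum.inl u₀) with hc₀
        set e : Equiv.Perm (Fin (s + 2)) := Equiv.swap c₀ (Fin.last (s + 1)) with he
        set c : β → Fin (s + 2) := fun b => e (g (Sum.inr (u₀, b))) with hc
        have key : ∀ i : Fin (s + 2), i ≠ Fin.last (s + 1) →
            IsDominatingSet H (c ⁻¹' {i}) := by
          intro i hi b hb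
          have hi' : e i ≠ c₀ := by
            intro h
            apply hi
            have := congrArg e h
            rw [Equiv.swap_apply_self] at this
            rw [this, he, Equiv.swap_apply_left]
          have hbg : Sum.inr (u₀, b) ∉ g ⁻¹' {e i} := by
            intro h
            apply hb
            have : g (Sum.inr (u₀, b)) = e i := h
            show e (g (Sum.inr (u₀, b))) = i
            rw [this, Equiv.swap_apply_self]
          obtain ⟨x, hx, hadj⟩ := hg (e i) (Sum.inr (u₀, b)) hbg
          match x with
          | Sum.inl v =>
            have huv : u₀ = v := hadj
            subst huv
            exact absurd (Eq.symm hx) hi'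
          | Sum.inr q =>
            obtain ⟨h1, h2⟩ := hadj
            refine ⟨q.2, ?_, h2⟩
            show e (g (Sum.inr (u₀, q.2))) = i
            have hq : (u₀, q.2) = q := by
              cases q; simp at h1 ⊢; exact h1
            rw [hq]
            have : g (Sum.inr q) = e i := hx
            rw [this, Equiv.swap_apply_self]
        refine ⟨fun b => if h : c b = Fin.last (s + 1) then ⟨0, Nat.succ_pos s⟩
          else (c b).castPred h, fun j => ?_⟩
        intro b hb
        have hjne : (j.castSucc : Fin (s + 2)) ≠ Fin.last (s + 1) :=
          Fin.ne_of_lt (Fin.castSucc_lt_last j)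
        have hbc : b ∉ c ⁻¹' {j.castSucc} := by
          intro h
          apply hb
          have hcb : c b = j.castSucc := h
          show (if h : c b = Fin.last (s + 1) then (⟨0, Nat.succ_pos s⟩ : Fin (s+1))
            else (c b).castPred h) = j
          rw [dif_neg (hcb ▸ hjne)]
          simp [hcb]
        obtain ⟨b', hb', hadj⟩ := key j.castSucc hjne b hbc
        have hcb' : c b' = j.castSucc := hb'
        refine ⟨b', ?_, hadj⟩
        show (if h : c b' = Fin.last (s + 1) then (⟨0, Nat.succ_pos s⟩ : Fin (s+1))
          else (c b').castPred h) = j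
        rw [dif_neg (hcb' ▸ hjne)]
        simp [hcb']
      have : s + 1 ≤ d := le_csSup (bdd_dom H) hmemH
      omega
  rw [hdC]
  exact le_antisymm (csSup_le ⟨d + 1, hmem⟩ hub) (le_csSup ⟨d + 1, hub⟩ hmem)
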